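/- arXiv:2605.19756 — 7 statements merged into one kernel-verified Lean document; each statement's English description precedes it below -/
import Mathlib

section
/- If a > 4, then for every b ∈ ℝ the EOS map F_{a,b} is bimodal: the set of critical points of F_{a,b} (points where F_{a,b}' vanishes) equals {−c, c}, where c = (1/a)·ln((1 + r)/(1 − r)) with r = √(1 − 4/a), and c > 0. -/
/-- The EOS map with parameters `a`, `b`: `F_{a,b}(x) = x + b - 1/(e^{-ax} + 1)`. -/
noncomputable def eosMap (a b x : ℝ) : ℝ := x + b - 1 / (Real.exp (-(a * x)) + 1)

/-- If `a > 4`, the EOS map `F_{a,b}` is bimodal: its set of critical points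
(points where the derivative vanishes) equals `{-c, c}` where
`c = (1/a)·ln((1+r)/(1-r))` with `r = √(1 - 4/a)`, and `c > 0`. -/
theorem eosMap_critical_points (a b : ℝ) (ha : 4 < a) :
    let r : ℝ := Real.sqrt (1 - 4 / a)
    let c : ℝ := (1 / a) * Real.log ((1 + r) / (1 - r))
    {x : ℝ | deriv (eosMap a b) x = 0} = {-c, c} ∧ 0 < c := by
  intro r c
  have ha0 : (0:ℝ) < a := by linarith
  have ha' : a ≠ 0 := ne_of_gt ha0
  have hpos : (0:ℝ) < 1 - 4 / a := by
    have : 4 / a < 1 := (div_lt_one ha0).mpr ha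
    linarith
  have hr2 : r ^ 2 = 1 - 4 / a := Real.sq_sqrt hpos.le
  have hr0 : 0 < r := Real.sqrt_pos.mpr hpos
  have hr1 : r < 1 := by
    nlinarith [hr2, div_pos (by norm_num : (0:ℝ) < 4) ha0]
  have h1r : (0:ℝ) < 1 - r := by linarith
  have h1r' : (0:ℝ) < 1 + r := by linarith
  have hq1 : 1 < (1 + r) / (1 - r) := by
    rw [lt_div_iff₀ h1r]; linarith
  have hlogq : 0 < Real.log ((1 + r) / (1 - r)) := Real.log_pos hq1
  have hc0 : 0 < c := mul_pos (by positivity) hlogq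
  have hac : a * c = Real.log ((1 + r) / (1 - r)) := by
    show a * ((1 / a) * Real.log ((1 + r) / (1 - r))) = _
    rw [← mul_assoc, mul_one_div_cancel ha', one_mul]
  have hfun : eosMap a b = fun y : ℝ => y + b - (Real.exp (-(a * y)) + 1)⁻¹ := by
    funext y; simp [eosMap, one_div]
  have hderiv : ∀ x : ℝ, deriv (eosMap a b) x
      = 1 - a * Real.exp (-(a * x)) / (Real.exp (-(a * x)) + 1) ^ 2 := by
    intro x
    have hne : Real.exp (-(a * x)) + 1 ≠ 0 := by positivity
    have h1 : HasDerivAt (fun y : ℝ => Real.exp (-(a * y)) + 1)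
        (Real.exp (-(a * x)) * (-a)) x := by
      have : HasDerivAt (fun y : ℝ => -(a * y)) (-a) x := by
        have := ((hasDerivAt_id' x).const_mul a).neg; rw [mul_one] at this; exact this
      simpa using (this.exp.add_const 1)
    have h2 : HasDerivAt (fun y : ℝ => (Real.exp (-(a * y)) + 1)⁻¹)
        (-(Real.exp (-(a * x)) * (-a)) / (Real.exp (-(a * x)) + 1) ^ 2) x :=
      h1.inv hne
    have h4 : HasDerivAt (fun y : ℝ => y + b) 1 x := (hasDerivAt_id x).add_const b
    have h3 := (h4.sub h2)
    rw [hfun, show (fun y : ℝ => y + b - (Real.exp (-(a * y)) + 1)⁻¹) = ((fun y : ℝ => y + b) - fun y : ℝ => (Real.exp (-(a * y)) + 1)⁻¹) from rfl, h3.deriv]; ring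
  refine ⟨?_, hc0⟩
  ext x
  simp only [Set.mem_setOf_eq, Set.mem_insert_iff, Set.mem_singleton_iff, hderiv x]
  set u := Real.exp (-(a * x)) with hu
  have hu0 : 0 < u := Real.exp_pos _
  have hune : ((u + 1) ^ 2 : ℝ) ≠ 0 := by positivity
  have iden : (u * (1 + r) - (1 - r)) * (u * (1 - r) - (1 + r))
      = ((u + 1) ^ 2 - a * u) * (4 / a) := by
    have hainv : a * a⁻¹ = 1 := mul_inv_cancel₀ ha'
    linear_combination (-(u + 1) ^ 2) * hr2 + (4 * u) * hainv
  have key : 1 - a * u / (u + 1) ^ 2 = 0 ↔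
      (u * (1 + r) - (1 - r)) * (u * (1 - r) - (1 + r)) = 0 := by
    rw [sub_eq_zero, eq_comm, div_eq_one_iff_eq hune, iden, mul_eq_zero]
    constructor
    · intro h; left; linarith
    · rintro (h | h)
      · linarith
      · exact absurd h (by positivity)
  rw [key, mul_eq_zero, sub_eq_zero, sub_eq_zero]
  have hlog1 : Real.log ((1 - r) / (1 + r)) = -(a * c) := by
    rw [hac, ← Real.log_inv]
    congr 1
    field_simp
  have e1 : u * (1 + r) = 1 - r ↔ x = c := by
    rw [← eq_div_iff (ne_of_gt h1r'), hu]
    constructor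
    · intro h
      have h2 := congrArg Real.log h
      rw [Real.log_exp, hlog1] at h2
      have : a * x = a * c := by linarith
      exact mul_left_cancel₀ ha' this
    · intro h
      rw [h, ← hlog1, Real.exp_log (div_pos h1r h1r')]
  have e2 : u * (1 - r) = 1 + r ↔ x = -c := by
    rw [← eq_div_iff (ne_of_gt h1r), hu]
    constructor
    · intro h
      have h2 := congrArg Real.log h
      rw [Real.log_exp, ← hac] at h2
      have : a * x = a * (-c) := by linarith
      exact mul_left_cancel₀ ha' this
    · intro h
      rw [h, show (-(a * -c)) = a * c from by ring, hac,
        Real.exp_log (div_pos h1r' h1r)]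
  rw [e1, e2]
  tauto
end

section
/- If a > 4 and b ∈ ℝ, then the EOS map F_{a,b} is strictly increasing on (−∞, −c], strictly decreasing on [−c, c], and strictly increasing on [c, ∞), where c = (1/a)·ln((1 + r)/(1 − r)) with r = √(1 − 4/a). In particular F_{a,b} has exactly three laps: on the first and third lap the map is increasing, and on the second lap it is decreasing. -/
/-- If `a > 4`, the EOS map has exactly three laps: it is strictly increasing on
`(-∞, -c]`, strictly decreasing on `[-c, c]`, and strictly increasing on `[c, ∞)`,
where `c = (1/a)·ln((1+r)/(1-r))` with `r = √(1 - 4/a)`. -/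
theorem eosMap_three_laps (a b : ℝ) (ha : 4 < a) :
    let r : ℝ := Real.sqrt (1 - 4 / a)
    let c : ℝ := (1 / a) * Real.log ((1 + r) / (1 - r))
    StrictMonoOn (eosMap a b) (Set.Iic (-c)) ∧
      StrictAntiOn (eosMap a b) (Set.Icc (-c) c) ∧
      StrictMonoOn (eosMap a b) (Set.Ici c) := by
  intro r c
  have ha0 : (0:ℝ) < a := by linarith
  have h4a : 0 < 1 - 4 / a := by
    rw [sub_pos, div_lt_one ha0]; linarith
  have hr0 : 0 < r := Real.sqrt_pos.mpr h4a
  have hr2 : r ^ 2 = 1 - 4 / a := Real.sq_sqrt h4a.le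
  have h4apos : 0 < 4 / a := by positivity
  have hr1 : r < 1 := by nlinarith
  have h1r : 0 < 1 - r := by linarith
  have hfrac1 : 1 < (1 + r) / (1 - r) := by
    rw [lt_div_iff₀ h1r]; linarith
  have hexp : Real.exp (a * c) = (1 + r) / (1 - r) := by
    have hac : a * c = Real.log ((1 + r) / (1 - r)) := by
      show a * (1 / a * _) = _
      field_simp
    rw [hac, Real.exp_log (by linarith)]
  have hc0 : 0 < c := mul_pos (by positivity) (Real.log_pos hfrac1)
  have hsum : Real.exp (a * c) + Real.exp (-(a * c)) = a - 2 := by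
    rw [Real.exp_neg, hexp]
    have h1r' : (1 - r) ≠ 0 := ne_of_gt h1r
    have h1r'' : (1 + r) ≠ 0 := by positivity
    have har2 : a * r ^ 2 = a - 4 := by
      rw [hr2]; field_simp
    field_simp
    nlinarith [har2]
  have hprod : Real.exp (a * c) * Real.exp (-(a * c)) = 1 := by
    rw [← Real.exp_add]; simp
  set p := Real.exp (a * c) with hp
  set q := Real.exp (-(a * c)) with hq
  have hqp : q < p := by
    rw [hp, hq]; exact Real.exp_lt_exp.mpr (by nlinarith)
  have hderiv : ∀ x : ℝ, HasDerivAt (eosMap a b)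
      ((Real.exp (-(a * x)) - p) * (Real.exp (-(a * x)) - q) /
        (Real.exp (-(a * x)) + 1) ^ 2) x := by
    intro x
    set u := Real.exp (-(a * x)) with hu
    have hu0 : 0 < u := Real.exp_pos _
    have hune : u + 1 ≠ 0 := by positivity
    have h1 : HasDerivAt (fun x : ℝ => Real.exp (-(a * x)) + 1) (-a * u) x := by
      have h0 : HasDerivAt (fun x : ℝ => -(a * x)) (-a) x := by
        simpa [Pi.neg_def] using ((hasDerivAt_id x).const_mul a).neg
      simpa [hu, mul_comm] using (h0.exp.add_const 1)
    have h2 : HasDerivAt (fun x : ℝ => (Real.exp (-(a * x)) + 1)⁻¹)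
        (-(-a * u) / (u + 1) ^ 2) x := h1.inv hune
    have h4 : HasDerivAt (fun x : ℝ => x + b) 1 x := (hasDerivAt_id x).add_const b
    have h3 := h4.sub h2
    have hfun : eosMap a b = fun x : ℝ => x + b - (Real.exp (-(a * x)) + 1)⁻¹ := by
      funext y; simp [eosMap, one_div]
    rw [hfun]
    refine h3.congr_deriv ?_
    have key : (u - p) * (u - q) = (u + 1) ^ 2 - a * u := by
      linear_combination (-u) * hsum + hprod
    field_simp
    linear_combination u * hsum - hprod
  have hdif : Differentiable ℝ (eosMap a b) := fun x => (hderiv x).differentiableAt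
  have hcont := hdif.continuous
  refine ⟨?_, ?_, ?_⟩
  · apply strictMonoOn_of_deriv_pos (convex_Iic _) hcont.continuousOn
    intro x hx
    rw [interior_Iic, Set.mem_Iio] at hx
    rw [(hderiv x).deriv]
    have h1 : p < Real.exp (-(a * x)) := by
      rw [hp]; exact Real.exp_lt_exp.mpr (by nlinarith)
    apply div_pos (mul_pos (by linarith) (by linarith)) (by positivity)
  · apply strictAntiOn_of_deriv_neg (convex_Icc _ _) hcont.continuousOn
    intro x hx
    rw [interior_Icc] at hx
    obtain ⟨hx1, hx2⟩ := hx
    rw [(hderiv x).deriv]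
    have h1 : Real.exp (-(a * x)) < p := by
      rw [hp]; exact Real.exp_lt_exp.mpr (by nlinarith)
    have h2 : q < Real.exp (-(a * x)) := by
      rw [hq]; exact Real.exp_lt_exp.mpr (by nlinarith)
    exact div_neg_of_neg_of_pos (mul_neg_of_neg_of_pos (by linarith) (by linarith))
      (by positivity)
  · apply strictMonoOn_of_deriv_pos (convex_Ici _) hcont.continuousOn
    intro x hx
    rw [interior_Ici, Set.mem_Ioi] at hx
    rw [(hderiv x).deriv]
    have h2 : Real.exp (-(a * x)) < q := by
      rw [hq]; exact Real.exp_lt_exp.mpr (by nlinarith)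
    apply div_pos (mul_pos_of_neg_of_neg (by linarith) (by linarith)) (by positivity)
end

section
/- For all a, b ∈ ℝ and every x with F_{a,b}'(x) ≠ 0, the Schwarzian derivative of the EOS map is given explicitly by S F_{a,b}(x) = −a³·u·(1 − 6u + (a/2)·u) / (1 − a·u)², where u = σ(ax)·(1 − σ(ax)) and σ(t) = 1/(1 + e^{−t}). -/
/-- The logistic sigmoid `σ(t) = 1/(1 + e^{-t})`. -/
noncomputable def sigmoid (t : ℝ) : ℝ := 1 / (1 + Real.exp (-t))

/-- The Schwarzian derivative of `f` at `x`: `Sf(x) = f'''(x)/f'(x) - (3/2)·(f''(x)/f'(x))²`. -/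
noncomputable def schwarzian (f : ℝ → ℝ) (x : ℝ) : ℝ :=
  deriv (deriv (deriv f)) x / deriv f x - (3 / 2) * (deriv (deriv f) x / deriv f x) ^ 2

lemma hasDerivAt_sigmoid (t : ℝ) :
    HasDerivAt sigmoid (sigmoid t * (1 - sigmoid t)) t := by
  have hpos : (0:ℝ) < 1 + Real.exp (-t) := by positivity
  have h : HasDerivAt (fun s : ℝ => 1 + Real.exp (-s)) (-Real.exp (-t)) t := by
    simpa using ((Real.hasDerivAt_exp (-t)).comp t ((hasDerivAt_id t).neg)).const_add 1
  have h2 := h.inv (ne_of_gt hpos)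
  have e1 : sigmoid = (fun s : ℝ => 1 + Real.exp (-s))⁻¹ := by
    funext s; simp [sigmoid, one_div]
  have e2 : sigmoid t * (1 - sigmoid t) = - -Real.exp (-t) / (1 + Real.exp (-t)) ^ 2 := by
    simp only [sigmoid]
    field_simp
    ring
  rw [e2, e1]; exact h2

lemma hasDerivAt_sig_comp (a x : ℝ) :
    HasDerivAt (fun z => sigmoid (a * z))
      (a * (sigmoid (a * x) * (1 - sigmoid (a * x)))) x := by
  have := (hasDerivAt_sigmoid (a * x)).comp x ((hasDerivAt_id x).const_mul a)
  exact this.congr_deriv (by ring)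

/-- For all `a, b ∈ ℝ` and every `x` with `F_{a,b}'(x) ≠ 0`, the Schwarzian derivative of
the EOS map is `S F_{a,b}(x) = -a³·u·(1 - 6u + (a/2)·u) / (1 - a·u)²`, where
`u = σ(ax)·(1 - σ(ax))`. -/
theorem eosMap_schwarzian_formula (a b x : ℝ) (hx : deriv (eosMap a b) x ≠ 0) :
    schwarzian (eosMap a b) x =
      -a ^ 3 * (sigmoid (a * x) * (1 - sigmoid (a * x))) *
          (1 - 6 * (sigmoid (a * x) * (1 - sigmoid (a * x))) +
            (a / 2) * (sigmoid (a * x) * (1 - sigmoid (a * x)))) /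
        (1 - a * (sigmoid (a * x) * (1 - sigmoid (a * x)))) ^ 2 := by
  set σ : ℝ → ℝ := fun z => sigmoid (a * z) with hσ
  have heos : eosMap a b = fun z => z + b - σ z := by
    funext z; simp [eosMap, hσ, sigmoid, add_comm]
  have hs : ∀ y, HasDerivAt σ (a * (σ y * (1 - σ y))) y := fun y => hasDerivAt_sig_comp a y
  have hF : ∀ y, HasDerivAt (eosMap a b) (1 - a * (σ y * (1 - σ y))) y := by
    intro y
    rw [heos]
    exact (((hasDerivAt_id y).add_const b).sub (hs y))
  have hD1 : deriv (eosMap a b) = fun y => 1 - a * (σ y * (1 - σ y)) :=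
    funext fun y => (hF y).deriv
  have hG : ∀ y, HasDerivAt (fun z => 1 - a * (σ z * (1 - σ z)))
      (-(a ^ 2) * (σ y * (1 - σ y) * (1 - 2 * σ y))) y := by
    intro y
    have h := (((hs y).mul ((hs y).const_sub 1)).const_mul a).const_sub 1
    exact h.congr_deriv (by ring)
  have hD2 : deriv (deriv (eosMap a b)) =
      fun y => -(a ^ 2) * (σ y * (1 - σ y) * (1 - 2 * σ y)) := by
    rw [hD1]; exact funext fun y => (hG y).deriv
  have hH : ∀ y, HasDerivAt (fun z => -(a ^ 2) * (σ z * (1 - σ z) * (1 - 2 * σ z)))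
      (-(a ^ 3) * (σ y * (1 - σ y)) * ((1 - 2 * σ y) ^ 2 - 2 * (σ y * (1 - σ y)))) y := by
    intro y
    have h := ((((hs y).mul ((hs y).const_sub 1)).mul
      (((hs y).const_mul 2).const_sub 1)).const_mul (-(a ^ 2)))
    exact h.congr_deriv (by simp only [Pi.mul_apply]; ring)
  have hD3 : deriv (deriv (deriv (eosMap a b))) x =
      -(a ^ 3) * (σ x * (1 - σ x)) * ((1 - 2 * σ x) ^ 2 - 2 * (σ x * (1 - σ x))) := by
    rw [hD2]; exact (hH x).deriv
  have hne : 1 - a * (σ x * (1 - σ x)) ≠ 0 := by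
    rw [hD1] at hx; exact hx
  rw [schwarzian, hD3, hD2, hD1]
  field_simp
  ring
end

section
/- If a ≥ 4 and b ∈ ℝ, then the EOS map F_{a,b} has negative Schwarzian derivative: S F_{a,b}(x) < 0 for every x ∈ ℝ with F_{a,b}'(x) ≠ 0. -/
lemma hasDerivAt_E (a x : ℝ) :
    HasDerivAt (fun x => Real.exp (-(a * x))) (-(a * Real.exp (-(a * x)))) x := by
  have h1 : HasDerivAt (fun x : ℝ => -(a * x)) (-a) x := by
    have := ((hasDerivAt_id x).const_mul a).neg
    simp only [mul_one] at this
    exact this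
  simpa [mul_comm] using h1.exp

lemma eos_d1 (a b : ℝ) :
    deriv (eosMap a b) =
      fun x => 1 - a * Real.exp (-(a * x)) / (Real.exp (-(a * x)) + 1) ^ 2 := by
  funext x
  have hu : 0 < Real.exp (-(a * x)) := Real.exp_pos _
  have hv : Real.exp (-(a * x)) + 1 ≠ 0 := by positivity
  have h : HasDerivAt (eosMap a b)
      (1 - (0 * (Real.exp (-(a * x)) + 1) - 1 * (-(a * Real.exp (-(a * x))))) /
        (Real.exp (-(a * x)) + 1) ^ 2) x := by
    exact ((hasDerivAt_id x).add_const b).sub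
      (((hasDerivAt_const x (1 : ℝ)).div ((hasDerivAt_E a x).add_const 1) hv))
  rw [h.deriv]
  field_simp
  ring

lemma eos_d2 (a : ℝ) :
    deriv (fun x => 1 - a * Real.exp (-(a * x)) / (Real.exp (-(a * x)) + 1) ^ 2) =
      fun x => a ^ 2 * Real.exp (-(a * x)) * (1 - Real.exp (-(a * x))) /
        (Real.exp (-(a * x)) + 1) ^ 3 := by
  funext x
  set u := Real.exp (-(a * x)) with hud
  have hu : 0 < u := Real.exp_pos _
  have hv : (u + 1) ^ 2 ≠ 0 := by positivity
  have h : HasDerivAt (fun x => 1 - a * Real.exp (-(a * x)) / (Real.exp (-(a * x)) + 1) ^ 2)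
      (0 - ((a * -(a * u)) * (u + 1) ^ 2 -
        (a * u) * ((2 : ℕ) * (u + 1) ^ (2 - 1) * -(a * u))) / ((u + 1) ^ 2) ^ 2) x := by
    exact (hasDerivAt_const x (1 : ℝ)).sub
      ((((hasDerivAt_E a x).const_mul a).div (((hasDerivAt_E a x).add_const 1).pow 2) hv))
  rw [h.deriv]
  have hv1 : u + 1 ≠ 0 := by positivity
  field_simp
  ring

lemma eos_d3 (a : ℝ) :
    deriv (fun x => a ^ 2 * Real.exp (-(a * x)) * (1 - Real.exp (-(a * x))) /
        (Real.exp (-(a * x)) + 1) ^ 3) =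
      fun x => a ^ 3 * Real.exp (-(a * x)) *
        (4 * Real.exp (-(a * x)) - Real.exp (-(a * x)) ^ 2 - 1) /
        (Real.exp (-(a * x)) + 1) ^ 4 := by
  funext x
  set u := Real.exp (-(a * x)) with hud
  have hu : 0 < u := Real.exp_pos _
  have hv : (u + 1) ^ 3 ≠ 0 := by positivity
  have hnum : HasDerivAt (fun x => a ^ 2 * Real.exp (-(a * x)) * (1 - Real.exp (-(a * x))))
      ((a ^ 2 * -(a * u)) * (1 - u) + (a ^ 2 * u) * (0 - -(a * u))) x := by
    exact ((hasDerivAt_E a x).const_mul (a ^ 2)).mul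
      ((hasDerivAt_const x (1 : ℝ)).sub (hasDerivAt_E a x))
  have h : HasDerivAt (fun x => a ^ 2 * Real.exp (-(a * x)) * (1 - Real.exp (-(a * x))) /
      (Real.exp (-(a * x)) + 1) ^ 3)
      ((((a ^ 2 * -(a * u)) * (1 - u) + (a ^ 2 * u) * (0 - -(a * u))) * (u + 1) ^ 3 -
        (a ^ 2 * u * (1 - u)) * ((3 : ℕ) * (u + 1) ^ (3 - 1) * -(a * u))) /
        ((u + 1) ^ 3) ^ 2) x := by
    exact hnum.div (((hasDerivAt_E a x).add_const 1).pow 3) hv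
  rw [h.deriv]
  have hv1 : u + 1 ≠ 0 := by positivity
  field_simp
  ring

/-- If `a ≥ 4` and `b ∈ ℝ`, the EOS map has negative Schwarzian derivative:
`S F_{a,b}(x) < 0` for every `x` with `F_{a,b}'(x) ≠ 0`. -/
theorem eosMap_schwarzian_neg (a b : ℝ) (ha : 4 ≤ a) :
    ∀ x : ℝ, deriv (eosMap a b) x ≠ 0 → schwarzian (eosMap a b) x < 0 := by
  intro x hx
  have hd1 := eos_d1 a b
  have hd2 : deriv (deriv (eosMap a b)) =
      fun x => a ^ 2 * Real.exp (-(a * x)) * (1 - Real.exp (-(a * x))) /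
        (Real.exp (-(a * x)) + 1) ^ 3 := by rw [hd1, eos_d2]
  have hd3 : deriv (deriv (deriv (eosMap a b))) =
      fun x => a ^ 3 * Real.exp (-(a * x)) *
        (4 * Real.exp (-(a * x)) - Real.exp (-(a * x)) ^ 2 - 1) /
        (Real.exp (-(a * x)) + 1) ^ 4 := by rw [hd2, eos_d3]
  simp only [hd1] at hx
  simp only [schwarzian]
  rw [hd3, hd2, hd1]
  beta_reduce
  set u := Real.exp (-(a * x)) with hud
  have hu : 0 < u := Real.exp_pos _
  have hv1 : u + 1 ≠ 0 := by positivity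
  have ha0 : (0 : ℝ) < a := by linarith
  -- the nonvanishing of the first derivative in polynomial form
  have hP : (u + 1) ^ 2 - a * u ≠ 0 := by
    intro h
    apply hx
    have hau : a * u = (u + 1) ^ 2 := by linarith
    rw [hau, div_self (by positivity)]
    ring
  -- positivity of the key polynomial
  have hB : 0 < (u ^ 2 - 1) ^ 2 + (a - 4) * u * (u + 1) ^ 2 / 2 := by
    rcases eq_or_lt_of_le ha with h | h
    · subst h
      have hu1 : u ≠ 1 := by
        intro h1
        apply hP
        rw [h1]; norm_num
      have h2 : u ^ 2 - 1 ≠ 0 := by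
        intro h2
        have h3 : (u - 1) * (u + 1) = 0 := by linear_combination h2
        rcases mul_eq_zero.mp h3 with h4 | h4
        · exact hu1 (by linarith)
        · linarith
      have h5 : 0 < (u ^ 2 - 1) ^ 2 :=
        lt_of_le_of_ne (sq_nonneg _) (Ne.symm (pow_ne_zero 2 h2))
      nlinarith
    · have hpos : 0 < (a - 4) * (u * (u + 1) ^ 2) :=
        mul_pos (by linarith) (mul_pos hu (by positivity))
      nlinarith [sq_nonneg (u ^ 2 - 1)]
  set P : ℝ := 1 - a * u / (u + 1) ^ 2 with hPdef
  set Q : ℝ := a ^ 2 * u * (1 - u) / (u + 1) ^ 3 with hQdef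
  set R : ℝ := a ^ 3 * u * (4 * u - u ^ 2 - 1) / (u + 1) ^ 4 with hRdef
  have hP2 : 0 < P ^ 2 := lt_of_le_of_ne (sq_nonneg _) (Ne.symm (pow_ne_zero 2 hx))
  have key : R / P - 3 / 2 * (Q / P) ^ 2 = (2 * R * P - 3 * Q ^ 2) / (2 * P ^ 2) := by
    field_simp
  rw [key]
  apply div_neg_of_neg_of_pos
  · have hid : 2 * R * P - 3 * Q ^ 2 =
        -(2 * a ^ 3 * u * ((u ^ 2 - 1) ^ 2 + (a - 4) * u * (u + 1) ^ 2 / 2)) /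
          (u + 1) ^ 6 := by
      rw [hPdef, hQdef, hRdef]
      field_simp
      ring
    rw [hid]
    apply div_neg_of_neg_of_pos
    · have : 0 < 2 * a ^ 3 * u * ((u ^ 2 - 1) ^ 2 + (a - 4) * u * (u + 1) ^ 2 / 2) :=
        mul_pos (mul_pos (by positivity) hu) hB
      linarith
    · positivity
  · linarith
end

section
/- Let a > 0 and b ∈ ℝ, and let σ(t) = 1/(1 + e^{−t}). If σ(a(b−1)) ≤ b and b ≤ σ(ab), then the EOS map F_{a,b} maps the interval [b−1, b] into itself: F_{a,b}([b−1, b]) ⊆ [b−1, b]. -/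
lemma sigmoid_pos (t : ℝ) : 0 < sigmoid t := by
  unfold sigmoid; positivity

lemma sigmoid_neg (t : ℝ) : sigmoid (-t) = 1 - sigmoid t := by
  unfold sigmoid
  have h1 : (0:ℝ) < 1 + Real.exp (-t) := by positivity
  have h2 : (0:ℝ) < 1 + Real.exp t := by positivity
  rw [neg_neg]
  field_simp
  rw [show (1 + Real.exp (-t) - 1) = Real.exp (-t) by ring, add_mul, one_mul, ← Real.exp_add, add_neg_cancel, Real.exp_zero]
  ring

lemma u_strictMono (a : ℝ) : StrictMono (fun t : ℝ => t * (1 + Real.exp (-(a * t)))) := by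
  apply strictMono_of_hasDerivAt_pos
    (f' := fun t => (1 + Real.exp (-(a * t))) + t * (Real.exp (-(a * t)) * (-a)))
  · intro t
    have h1 : HasDerivAt (fun t : ℝ => -(a * t)) (-a) t := by
      have h := ((hasDerivAt_id t).const_mul a).neg; rw [mul_one] at h; exact h
    have h2 : HasDerivAt (fun t : ℝ => Real.exp (-(a * t))) (Real.exp (-(a * t)) * (-a)) t :=
      (Real.hasDerivAt_exp _).comp t h1
    have h3 : HasDerivAt (fun t : ℝ => 1 + Real.exp (-(a * t))) (Real.exp (-(a * t)) * (-a)) t :=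
      h2.const_add 1
    have h := (hasDerivAt_id t).mul h3; rw [one_mul] at h; exact h
  · intro t
    have hle : a * t ≤ Real.exp (a * t) := (Real.add_one_le_exp (a * t)).trans' (by linarith)
    have hpos : (0:ℝ) < Real.exp (-(a * t)) := Real.exp_pos _
    have key : a * t * Real.exp (-(a * t)) ≤ 1 := by
      have := mul_le_mul_of_nonneg_right hle hpos.le
      rwa [← Real.exp_add, add_neg_cancel, Real.exp_zero] at this
    nlinarith [Real.exp_pos (-(a * t))]

/-- Key lemma: if `x ≤ B` and `B ≤ σ(aB)`, then `x ≤ σ(ax)`. -/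
lemma key (a x B : ℝ) (hxB : x ≤ B) (hB : B ≤ sigmoid (a * B)) : x ≤ sigmoid (a * x) := by
  rcases le_or_gt x 0 with hx | hx
  · exact hx.trans (sigmoid_pos _).le
  · have hdenB : (0:ℝ) < 1 + Real.exp (-(a * B)) := by positivity
    have hdenx : (0:ℝ) < 1 + Real.exp (-(a * x)) := by positivity
    have hB' : B * (1 + Real.exp (-(a * B))) ≤ 1 := by
      rw [sigmoid, le_div_iff₀ hdenB] at hB; linarith
    have hmono := (u_strictMono a).monotone hxB
    have : x * (1 + Real.exp (-(a * x))) ≤ 1 := le_trans hmono hB'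
    rw [sigmoid, le_div_iff₀ hdenx]; linarith

/-- If `a > 0`, `σ(a(b-1)) ≤ b` and `b ≤ σ(ab)`, then the EOS map maps the
interval `[b-1, b]` into itself. -/
theorem eosMap_mapsTo (a b : ℝ) (ha : 0 < a)
    (h1 : sigmoid (a * (b - 1)) ≤ b) (h2 : b ≤ sigmoid (a * b)) :
    Set.MapsTo (eosMap a b) (Set.Icc (b - 1) b) (Set.Icc (b - 1) b) := by
  intro x hx
  obtain ⟨hx1, hx2⟩ := hx
  have hsig : 1 / (Real.exp (-(a * x)) + 1) = sigmoid (a * x) := by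
    rw [sigmoid, add_comm]
  -- upper bound: x ≤ σ(ax)
  have hup : x ≤ sigmoid (a * x) := key a x b hx2 h2
  -- lower bound: σ(ax) ≤ x + 1, i.e. -x ≤ σ(-ax)
  have h1' : 1 - b ≤ sigmoid (a * (1 - b)) := by
    have := sigmoid_neg (a * (b - 1))
    have heq : -(a * (b - 1)) = a * (1 - b) := by ring
    rw [heq] at this
    linarith
  have hlow' : -x ≤ sigmoid (a * (-x)) := by
    apply key a (-x) (1 - b) (by linarith) h1'
  have hlow : sigmoid (a * x) ≤ x + 1 := by
    have := sigmoid_neg (a * x)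
    have heq : -(a * x) = a * (-x) := by ring
    rw [heq] at this
    linarith
  constructor
  · simp only [eosMap, hsig]; linarith
  · simp only [eosMap, hsig]; linarith
end

section
/- Let a > 0 and 0 < b < 1, and let x* = (1/a)·ln(b/(1−b)) be the unique fixed point of the EOS map F_{a,b}. Then |F_{a,b}'(x*)| < 1 if and only if a·b·(1−b) < 2. Moreover, if a ≥ 8, this holds if and only if b < β or b > 1 − β, where β = (1 − √(1 − 8/a))/2. -/
lemma eosMap_deriv (a b x : ℝ) :
    deriv (eosMap a b) x =
      1 - a * Real.exp (-(a * x)) / (Real.exp (-(a * x)) + 1) ^ 2 := by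
  have hpos : (0:ℝ) < Real.exp (-(a * x)) + 1 := by positivity
  have h1 : HasDerivAt (fun y : ℝ => -(a * y)) (-a) x := by
    simpa using ((hasDerivAt_id x).const_mul a).fun_neg
  have h2 : HasDerivAt (fun y : ℝ => Real.exp (-(a * y)) + 1)
      (Real.exp (-(a * x)) * (-a)) x := (h1.exp).add_const 1
  have h3 : HasDerivAt (fun y : ℝ => (Real.exp (-(a * y)) + 1)⁻¹)
      (-(Real.exp (-(a * x)) * (-a)) / (Real.exp (-(a * x)) + 1) ^ 2) x :=
    h2.inv hpos.ne'
  have heq : eosMap a b = fun y : ℝ => y + b - (Real.exp (-(a * y)) + 1)⁻¹ := by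
    funext y; simp [eosMap, one_div]
  have h4 : HasDerivAt (fun y : ℝ => y + b - (Real.exp (-(a * y)) + 1)⁻¹)
      (1 - -(Real.exp (-(a * x)) * (-a)) / (Real.exp (-(a * x)) + 1) ^ 2) x := by
    simpa using ((hasDerivAt_id x).add_const b).fun_sub h3
  rw [heq, h4.deriv]; ring

/-- Let `a > 0`, `0 < b < 1` and `x* = (1/a)·ln(b/(1-b))` be the unique fixed point of
the EOS map. Then `|F_{a,b}'(x*)| < 1 ↔ a·b·(1-b) < 2`; moreover if `a ≥ 8`, this
holds iff `b < β` or `b > 1 - β`, where `β = (1 - √(1 - 8/a))/2`. -/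
theorem eosMap_attracting_fixed_point (a b : ℝ) (ha : 0 < a) (hb0 : 0 < b) (hb1 : b < 1) :
    (|deriv (eosMap a b) ((1 / a) * Real.log (b / (1 - b)))| < 1 ↔
        a * b * (1 - b) < 2) ∧
    (8 ≤ a →
      (|deriv (eosMap a b) ((1 / a) * Real.log (b / (1 - b)))| < 1 ↔
        b < (1 - Real.sqrt (1 - 8 / a)) / 2 ∨ 1 - (1 - Real.sqrt (1 - 8 / a)) / 2 < b)) := by
  set x := (1 / a) * Real.log (b / (1 - b)) with hx
  have hb1' : (0:ℝ) < 1 - b := by linarith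
  have hexp : Real.exp (-(a * x)) = (1 - b) / b := by
    have : -(a * x) = Real.log ((1 - b) / b) := by
      rw [hx, Real.log_div hb0.ne' hb1'.ne', Real.log_div hb1'.ne' hb0.ne']
      field_simp
      ring
    rw [this, Real.exp_log (by positivity)]
  have hderiv : deriv (eosMap a b) x = 1 - a * b * (1 - b) := by
    rw [eosMap_deriv, hexp]
    have h1 : (1 - b) / b + 1 = 1 / b := by field_simp; ring
    rw [h1]
    field_simp
  have hpos : 0 < a * b * (1 - b) := by positivity
  have hmain : |deriv (eosMap a b) x| < 1 ↔ a * b * (1 - b) < 2 := by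
    rw [hderiv, abs_lt]
    constructor
    · rintro ⟨h1, h2⟩; linarith
    · intro h; constructor <;> linarith
  refine ⟨hmain, fun ha8 => ?_⟩
  rw [hmain]
  set s := Real.sqrt (1 - 8 / a) with hs
  have hsn : 0 ≤ s := Real.sqrt_nonneg _
  have hs2 : s ^ 2 = 1 - 8 / a := Real.sq_sqrt (by
    have : 8 / a ≤ 1 := (div_le_one ha).mpr ha8
    linarith)
  have hkey : a * (8 / a) = 8 := by field_simp
  have hs1 : s ≤ 1 := Real.sqrt_le_one.mpr (by
    have : 0 < 8 / a := by positivity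
    linarith)
  constructor
  · intro h
    by_contra hc
    push_neg at hc
    obtain ⟨h1, h2⟩ := hc
    -- β ≤ b ≤ 1 - β
    nlinarith [mul_nonneg (mul_nonneg ha.le (by linarith : 0 ≤ b - (1 - s) / 2))
      (by linarith : 0 ≤ (1 - (1 - s) / 2) - b)]
  · rintro (h | h)
    · have h2 : b < 1 - (1 - s) / 2 := by linarith
      nlinarith [mul_pos (mul_pos ha (by linarith : 0 < (1 - s) / 2 - b))
        (by linarith : 0 < (1 - (1 - s) / 2) - b)]
    · have h2 : (1 - s) / 2 < b := by linarith
      nlinarith [mul_pos (mul_pos ha (by linarith : 0 < b - (1 - s) / 2))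
        (by linarith : 0 < b - (1 - (1 - s) / 2))]
end

section
/- Let a > 0, b ∈ ℝ, n ≥ 1, and x ∈ ℝ. If F_{a,b}'(F_{a,b}^k(x)) > 0 for every k = 0, 1, …, n−1 (i.e., every point of the orbit segment lies in a lap where the map is increasing), then the derivative of the n-th iterate satisfies 0 < (F_{a,b}^n)'(x) < 1. In particular, along any periodic orbit contained entirely in the increasing laps, the multiplier of the orbit is strictly between 0 and 1, so the orbit is attracting. -/
lemma eosMap_hasDerivAt (a b x : ℝ) :
    HasDerivAt (eosMap a b)
      (1 - a * Real.exp (-(a * x)) / (Real.exp (-(a * x)) + 1) ^ 2) x := by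
  have hne : Real.exp (-(a * x)) + 1 ≠ 0 := by positivity
  have h1 : HasDerivAt (fun y : ℝ => -(a * y)) (-a) x := by
    simpa using ((hasDerivAt_id x).const_mul a).fun_neg
  have h2 : HasDerivAt (fun y : ℝ => Real.exp (-(a * y)) + 1)
      (Real.exp (-(a * x)) * (-a)) x := (h1.exp).add_const 1
  have h3 := h2.fun_inv hne
  have h4 := ((hasDerivAt_id x).add_const b).fun_sub h3
  have : eosMap a b = fun y : ℝ => y + b - (Real.exp (-(a * y)) + 1)⁻¹ := by
    funext y; simp [eosMap, one_div]
  rw [this]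
  refine h4.congr_deriv ?_
  ring

lemma eosMap_deriv_lt_one (a b : ℝ) (ha : 0 < a) (x : ℝ) : deriv (eosMap a b) x < 1 := by
  rw [(eosMap_hasDerivAt a b x).deriv]
  have : 0 < a * Real.exp (-(a * x)) / (Real.exp (-(a * x)) + 1) ^ 2 := by positivity
  linarith

lemma eosMap_diff (a b : ℝ) : Differentiable ℝ (eosMap a b) :=
  fun x => (eosMap_hasDerivAt a b x).differentiableAt

/-- Let `a > 0`, `b ∈ ℝ`, `n ≥ 1` and `x ∈ ℝ`. If `F_{a,b}'(F_{a,b}^k(x)) > 0` for every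
`k = 0, 1, …, n-1`, then the derivative of the `n`-th iterate satisfies
`0 < (F_{a,b}^n)'(x) < 1`. -/
theorem eosMap_iterate_deriv_lt_one (a b : ℝ) (ha : 0 < a) (n : ℕ) (hn : 1 ≤ n) (x : ℝ)
    (hpos : ∀ k, k < n → 0 < deriv (eosMap a b) ((eosMap a b)^[k] x)) :
    0 < deriv ((eosMap a b)^[n]) x ∧ deriv ((eosMap a b)^[n]) x < 1 := by
  induction n with
  | zero => omega
  | succ m ih =>
    have hdiff := eosMap_diff a b
    have hdiffit : ∀ k, Differentiable ℝ ((eosMap a b)^[k]) := fun k =>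
      Differentiable.iterate hdiff k
    have hcomp : deriv ((eosMap a b)^[m+1]) x
        = deriv (eosMap a b) ((eosMap a b)^[m] x) * deriv ((eosMap a b)^[m]) x := by
      rw [Function.iterate_succ']
      exact deriv_comp x (hdiff _) (hdiffit m x)
    rcases Nat.eq_or_lt_of_le (Nat.one_le_iff_ne_zero.mpr (Nat.succ_ne_zero m)) with h | h
    · -- m = 0
      have hm : m = 0 := by omega
      subst hm
      simp only [hcomp, Function.iterate_zero, id_eq]
      have h0 := hpos 0 (by omega)
      simp only [Function.iterate_zero, id_eq] at h0
      rw [deriv_id, mul_one]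
      constructor
      · simpa using h0
      · simpa using eosMap_deriv_lt_one a b ha x
    · have hm : 1 ≤ m := by omega
      have ihm := ih hm (fun k hk => hpos k (by omega))
      have hf := hpos m (by omega)
      have hlt := eosMap_deriv_lt_one a b ha ((eosMap a b)^[m] x)
      rw [hcomp]
      constructor
      · exact mul_pos hf ihm.1
      · nlinarith [ihm.1, ihm.2, hf, hlt]
end
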